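/- arXiv:2305.06797 — 4 statements merged into one kernel-verified Lean document; each statement's English description precedes it below -/
import Mathlib

section
/- For every nonnegative measurable f on (0,∞) and every t ∈ (0,∞), (R_α + H_α) f(t) ≤ (H_α ∘ P) f(t) ≤ (n/(n−α)) (R_α + H_α) f(t), where P f(t) = (1/t)∫_0^t f, R_α f(t) = φ_α(t)∫_0^t f, and H_α f(t) = ∫_t^∞ f(s)φ_α(s) ds. -/
open MeasureTheory Set Real
open scoped ENNReal

/-- `φ_α(t) = min{t^(−1+α/n), t^(−1)}`. -/
noncomputable def phi (n : ℕ) (α : ℝ) (t : ℝ) : ℝ := min (t ^ (-1 + α / n)) t⁻¹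

/-- Hardy averaging operator `P f(t) = (1/t) ∫_0^t f`. -/
noncomputable def Pop (f : ℝ → ℝ≥0∞) (t : ℝ) : ℝ≥0∞ :=
  (∫⁻ s in Set.Ioo (0 : ℝ) t, f s) / ENNReal.ofReal t

/-- `R_α f(t) = φ_α(t) ∫_0^t f`. -/
noncomputable def Rop (n : ℕ) (α : ℝ) (f : ℝ → ℝ≥0∞) (t : ℝ) : ℝ≥0∞ :=
  ENNReal.ofReal (phi n α t) * ∫⁻ s in Set.Ioo (0 : ℝ) t, f s

/-- `H_α f(t) = ∫_t^∞ f(s) φ_α(s) ds`. -/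
noncomputable def Hop (n : ℕ) (α : ℝ) (f : ℝ → ℝ≥0∞) (t : ℝ) : ℝ≥0∞ :=
  ∫⁻ s in Set.Ioi t, f s * ENNReal.ofReal (phi n α s)

noncomputable def Kf (n : ℕ) (α : ℝ) (a : ℝ) : ℝ≥0∞ :=
  ∫⁻ s in Set.Ioi a, ENNReal.ofReal (phi n α s / s)

lemma phi_meas (n : ℕ) (α : ℝ) : Measurable (phi n α) := by
  unfold phi
  exact Measurable.min (by measurability) measurable_inv

lemma phi_nonneg (n : ℕ) (α : ℝ) {t : ℝ} (ht : 0 < t) : 0 ≤ phi n α t :=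
  le_min (rpow_nonneg ht.le _) (inv_nonneg.2 ht.le)

lemma phi_of_one_le {n : ℕ} {α : ℝ} (hr : 0 ≤ α / n) {a : ℝ} (ha : 1 ≤ a) :
    phi n α a = a⁻¹ := by
  apply min_eq_right
  rw [← Real.rpow_neg_one]
  exact Real.rpow_le_rpow_of_exponent_le ha (by linarith)

lemma phi_of_le_one {n : ℕ} {α : ℝ} (hr : 0 ≤ α / n) {a : ℝ} (h0 : 0 < a) (h1 : a ≤ 1) :
    phi n α a = a ^ (-1 + α / n) := by
  apply min_eq_left
  rw [← Real.rpow_neg_one]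
  exact Real.rpow_le_rpow_of_exponent_ge h0 h1 (by linarith)

lemma K_of_one_le {n : ℕ} {α : ℝ} (hr : 0 ≤ α / n) {a : ℝ} (ha : 1 ≤ a) :
    Kf n α a = ENNReal.ofReal a⁻¹ := by
  have h0 : (0:ℝ) < a := lt_of_lt_of_le one_pos ha
  have hcong : ∀ s ∈ Ioi a, ENNReal.ofReal (phi n α s / s) = ENNReal.ofReal (s ^ (-2 : ℝ)) := by
    intro s hs
    have hs1 : (1:ℝ) ≤ s := ha.trans (le_of_lt hs)
    have hs0 : (0:ℝ) < s := lt_of_lt_of_le one_pos hs1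
    rw [phi_of_one_le hr hs1, show (-2 : ℝ) = -1 + -1 by ring, Real.rpow_add hs0,
      Real.rpow_neg_one, div_eq_mul_inv]
  rw [Kf, setLIntegral_congr_fun measurableSet_Ioi hcong,
    ← ofReal_integral_eq_lintegral_ofReal (integrableOn_Ioi_rpow_of_lt (by norm_num) h0)
      (Filter.eventually_of_mem (self_mem_ae_restrict measurableSet_Ioi)
        (fun s hs => Real.rpow_nonneg (h0.trans hs).le _)),
    integral_Ioi_rpow_of_lt (by norm_num) h0]
  norm_num
  rw [Real.rpow_neg_one]

lemma K_head {n : ℕ} {α : ℝ} (hr0 : 0 ≤ α / n) (hr1 : α / n < 1) {a : ℝ}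
    (h0 : 0 < a) (h1 : a ≤ 1) :
    ∫⁻ s in Set.Ioc a 1, ENNReal.ofReal (phi n α s / s)
      = ENNReal.ofReal ((a ^ (-(1 - α / n)) - 1) / (1 - α / n)) := by
  set p : ℝ := -2 + α / n with hp
  have hcong : ∀ s ∈ Ioc a 1, ENNReal.ofReal (phi n α s / s) = ENNReal.ofReal (s ^ p) := by
    intro s hs
    have hs0 : (0:ℝ) < s := h0.trans hs.1
    congr 1
    rw [phi_of_le_one hr0 hs0 hs.2, div_eq_mul_inv, ← Real.rpow_neg_one s,
      ← Real.rpow_add hs0, hp]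
    ring_nf
  have hint : IntegrableOn (fun s : ℝ => s ^ p) (Ioc a 1) := by
    have : IntervalIntegrable (fun s : ℝ => s ^ p) volume a 1 := by
      apply intervalIntegral.intervalIntegrable_rpow
      right
      rw [Set.uIcc_of_le h1]
      intro h; exact absurd h.1 (not_le.2 h0)
    simpa [intervalIntegrable_iff, Set.uIoc_of_le h1] using this
  rw [setLIntegral_congr_fun measurableSet_Ioc hcong,
    ← ofReal_integral_eq_lintegral_ofReal hint
      (Filter.eventually_of_mem (self_mem_ae_restrict measurableSet_Ioc)
        (fun s hs => Real.rpow_nonneg (h0.trans hs.1).le _))]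
  congr 1
  rw [← intervalIntegral.integral_of_le h1, integral_rpow]
  · rw [Real.one_rpow]
    have hp1 : p + 1 = -(1 - α / n) := by rw [hp]; ring
    rw [hp1, div_neg, ← neg_div, neg_sub]
  · right
    constructor
    · rw [hp]; intro h; rw [show α / n = 1 by linarith [h]] at hr1; linarith
    · rw [Set.uIcc_of_le h1]; intro h; exact absurd h.1 (not_le.2 h0)

lemma K_small {n : ℕ} {α : ℝ} (hr0 : 0 ≤ α / n) (hr1 : α / n < 1) {a : ℝ}
    (h0 : 0 < a) (h1 : a ≤ 1) :
    Kf n α a = ENNReal.ofReal ((a ^ (-1 + α / n) - 1) / (1 - α / n) + 1) := by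
  have hx : (1:ℝ) ≤ a ^ (-1 + α / n) :=
    Real.one_le_rpow_of_pos_of_le_one_of_nonpos h0 h1 (by linarith)
  have hβ : (0:ℝ) < 1 - α / n := by linarith
  have hdisj : Disjoint (Ioc a 1) (Ioi (1:ℝ)) :=
    Set.disjoint_left.2 fun x hx hx' => absurd hx.2 (not_le.2 hx')
  have hsplit : Ioc a 1 ∪ Ioi (1:ℝ) = Ioi a := Set.Ioc_union_Ioi_eq_Ioi h1
  rw [Kf, ← hsplit, lintegral_union measurableSet_Ioi hdisj]
  have h2 : (∫⁻ s in Ioi (1:ℝ), ENNReal.ofReal (phi n α s / s)) = 1 := by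
    have := K_of_one_le (n := n) (α := α) hr0 (le_refl (1:ℝ))
    rw [Kf] at this
    simpa using this
  rw [K_head hr0 hr1 h0 h1, h2, show (-(1 - α / (n:ℝ))) = -1 + α / n by ring,
    ← ENNReal.ofReal_one,
    ← ENNReal.ofReal_add (div_nonneg (by linarith) (by linarith)) zero_le_one]

lemma K_lb {n : ℕ} {α : ℝ} (hr0 : 0 ≤ α / n) (hr1 : α / n < 1) {a : ℝ} (h0 : 0 < a) :
    ENNReal.ofReal (phi n α a) ≤ Kf n α a := by
  rcases le_or_gt 1 a with ha | ha
  · rw [K_of_one_le hr0 ha, phi_of_one_le hr0 ha]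
  · have h1 : a ≤ 1 := ha.le
    rw [K_small hr0 hr1 h0 h1, phi_of_le_one hr0 h0 h1]
    apply ENNReal.ofReal_le_ofReal
    set x := a ^ (-1 + α / n) with hxdef
    have hx : (1:ℝ) ≤ x :=
      Real.one_le_rpow_of_pos_of_le_one_of_nonpos h0 h1 (by linarith)
    have hβ0 : (0:ℝ) < 1 - α / n := by linarith
    have hβ1 : (1:ℝ) - α / n ≤ 1 := by linarith
    have : x - 1 ≤ (x - 1) / (1 - α / n) := by
      rw [le_div_iff₀ hβ0]; nlinarith
    linarith

lemma K_ub {n : ℕ} {α : ℝ} (hr0 : 0 ≤ α / n) (hr1 : α / n < 1) {a : ℝ} (h0 : 0 < a) :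
    Kf n α a ≤ ENNReal.ofReal (1 - α / n)⁻¹ * ENNReal.ofReal (phi n α a) := by
  have hβ0 : (0:ℝ) < 1 - α / n := by linarith
  have hβinv : (1:ℝ) ≤ (1 - α / n)⁻¹ := by
    rw [le_inv_comm₀ one_pos hβ0, inv_one]; linarith
  rcases le_or_gt 1 a with ha | ha
  · rw [K_of_one_le hr0 ha, phi_of_one_le hr0 ha, ← ENNReal.ofReal_mul (by positivity)]
    apply ENNReal.ofReal_le_ofReal
    nlinarith [inv_nonneg.2 (le_of_lt (lt_of_lt_of_le one_pos ha)),
      inv_nonneg.2 (show (0:ℝ) ≤ a by linarith)]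
  · have h1 : a ≤ 1 := ha.le
    rw [K_small hr0 hr1 h0 h1, phi_of_le_one hr0 h0 h1, ← ENNReal.ofReal_mul (by positivity)]
    apply ENNReal.ofReal_le_ofReal
    set x := a ^ (-1 + α / n) with hxdef
    have hx : (1:ℝ) ≤ x :=
      Real.one_le_rpow_of_pos_of_le_one_of_nonpos h0 h1 (by linarith)
    rw [div_add' _ _ _ hβ0.ne', inv_mul_eq_div, div_le_div_iff₀ hβ0 hβ0]
    nlinarith
lemma g_meas (n : ℕ) (α : ℝ) : Measurable (fun s => ENNReal.ofReal (phi n α s / s)) :=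
  ((phi_meas n α).div measurable_id).ennreal_ofReal

lemma K_antitone (n : ℕ) (α : ℝ) : Antitone (Kf n α) := fun a b hab =>
  lintegral_mono' (Measure.restrict_mono (Set.Ioi_subset_Ioi hab) le_rfl) le_rfl

lemma Hop_Pop_eq (n : ℕ) (α : ℝ) (f : ℝ → ℝ≥0∞) (hf : Measurable f)
    {t : ℝ} (ht : 0 < t) :
    Hop n α (Pop f) t
      = (∫⁻ u in Set.Ioo (0:ℝ) t, f u) * Kf n α t + ∫⁻ u in Set.Ioi t, f u * Kf n α u := by
  set g : ℝ → ℝ≥0∞ := fun s => ENNReal.ofReal (phi n α s / s) with hgdef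
  have hg : Measurable g := g_meas n α
  set A : ℝ≥0∞ := ∫⁻ u in Set.Ioo (0:ℝ) t, f u with hA
  set B : ℝ → ℝ≥0∞ := fun s => ∫⁻ u in Set.Ioo t s, f u with hBdef
  have hBmono : Monotone B := fun a b hab =>
    lintegral_mono' (Measure.restrict_mono (Set.Ioo_subset_Ioo le_rfl hab) le_rfl) le_rfl
  have hB : Measurable B := hBmono.measurable
  -- Step 1: pointwise rewriting of the integrand
  have step1 : Hop n α (Pop f) t = ∫⁻ s in Set.Ioi t, (A * g s + B s * g s) := by
    rw [Hop]
    apply setLIntegral_congr_fun measurableSet_Ioi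
    intro s hs
    beta_reduce
    have hts : t < s := hs
    have hs0 : (0:ℝ) < s := ht.trans hts
    have hsum : (∫⁻ u in Set.Ioo (0:ℝ) s, f u) = A + B s := by
      rw [← Set.Ioo_union_Ico_eq_Ioo ht hts.le,
        lintegral_union measurableSet_Ico
          (Set.disjoint_left.2 fun x hx hx' => absurd hx.2 (not_lt.2 hx'.1)),
        hA, hBdef]
      congr 1
      exact (setLIntegral_congr Ioo_ae_eq_Ico).symm
    have hdiv : ∀ X c d : ℝ≥0∞, X / c * d = X * (d / c) := by
      intro X c d
      rw [div_eq_mul_inv, div_eq_mul_inv, mul_assoc, mul_comm c⁻¹ d]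
    rw [Pop, hsum, ENNReal.add_div, add_mul]
    congr 1 <;>
    · rw [hdiv, ← ENNReal.ofReal_div_of_pos hs0]
  rw [step1, lintegral_add_left (hg.const_mul A), lintegral_const_mul A hg]
  congr 1
  -- Step 2: Tonelli on the second term
  set F : ℝ × ℝ → ℝ≥0∞ :=
    fun q => ({q : ℝ × ℝ | q.2 < q.1}).indicator (fun q => f q.2 * g q.1) q with hFdef
  have hFmeas : Measurable F :=
    Measurable.indicator ((hf.comp measurable_snd).mul (hg.comp measurable_fst))
      (measurableSet_lt measurable_snd measurable_fst)
  have e1 : ∫⁻ s in Set.Ioi t, B s * g s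
      = ∫⁻ s in Set.Ioi t, ∫⁻ u in Set.Ioi t, F (s, u) := by
    apply setLIntegral_congr_fun measurableSet_Ioi
    intro s hs
    beta_reduce
    have hind : (fun u => F (s, u)) = (Set.Iio s).indicator (fun u => f u * g s) := by
      funext u
      by_cases h : u < s <;> simp [hFdef, Set.indicator_apply, h]
    rw [hind, lintegral_indicator measurableSet_Iio,
      Measure.restrict_restrict measurableSet_Iio, Set.inter_comm, Set.Ioi_inter_Iio,
      lintegral_mul_const _ hf]
  have e2 : ∫⁻ u in Set.Ioi t, ∫⁻ s in Set.Ioi t, F (s, u)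
      = ∫⁻ u in Set.Ioi t, f u * Kf n α u := by
    apply setLIntegral_congr_fun measurableSet_Ioi
    intro u hu
    beta_reduce
    have hind : (fun s => F (s, u)) = (Set.Ioi u).indicator (fun s => f u * g s) := by
      funext s
      by_cases h : u < s <;> simp [hFdef, Set.indicator_apply, h]
    rw [hind, lintegral_indicator measurableSet_Ioi,
      Measure.restrict_restrict measurableSet_Ioi, Set.Ioi_inter_Ioi,
      sup_eq_left.2 (le_of_lt hu), lintegral_const_mul _ hg]
    rfl
  rw [e1, lintegral_lintegral_swap hFmeas.aemeasurable, e2]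

theorem stmt1 (n : ℕ) (hn : 2 ≤ n) (α : ℝ) (hα0 : 0 ≤ α) (hαn : α < n)
    (f : ℝ → ℝ≥0∞) (hf : Measurable f) (t : ℝ) (ht : 0 < t) :
    Rop n α f t + Hop n α f t ≤ Hop n α (Pop f) t ∧
      Hop n α (Pop f) t ≤
        ENNReal.ofReal ((n : ℝ) / (n - α)) * (Rop n α f t + Hop n α f t) := by
  have hn0 : (0:ℝ) < n := Nat.cast_pos.2 (by omega)
  have hr0 : 0 ≤ α / n := div_nonneg hα0 hn0.le
  have hr1 : α / n < 1 := (div_lt_one hn0).2 hαn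
  have hCeq : ((n:ℝ)) / ((n:ℝ) - α) = (1 - α / n)⁻¹ := by
    rw [show (1 - α / (n:ℝ)) = ((n:ℝ) - α) / n by field_simp, inv_div]
  have hphiM : Measurable fun u => f u * ENNReal.ofReal (phi n α u) :=
    hf.mul (phi_meas n α).ennreal_ofReal
  rw [Hop_Pop_eq n α f hf ht]
  constructor
  · apply add_le_add
    · rw [Rop, mul_comm]
      exact mul_le_mul_right (K_lb hr0 hr1 ht) _
    · rw [Hop]
      apply setLIntegral_mono (hf.mul (K_antitone n α).measurable)
      intro u hu
      exact mul_le_mul_right (K_lb hr0 hr1 (ht.trans hu)) _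
  · rw [mul_add]
    apply add_le_add
    · rw [Rop, hCeq]
      calc (∫⁻ u in Set.Ioo (0:ℝ) t, f u) * Kf n α t
          ≤ (∫⁻ u in Set.Ioo (0:ℝ) t, f u) *
            (ENNReal.ofReal (1 - α / n)⁻¹ * ENNReal.ofReal (phi n α t)) :=
            mul_le_mul_right (K_ub hr0 hr1 ht) _
        _ = ENNReal.ofReal (1 - α / n)⁻¹
            * (ENNReal.ofReal (phi n α t) * ∫⁻ u in Set.Ioo (0:ℝ) t, f u) := by ring
    · rw [Hop, hCeq, ← lintegral_const_mul _ hphiM]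
      apply setLIntegral_mono (measurable_const.mul hphiM)
      intro u hu
      calc f u * Kf n α u
          ≤ f u * (ENNReal.ofReal (1 - α / n)⁻¹ * ENNReal.ofReal (phi n α u)) :=
            mul_le_mul_right (K_ub hr0 hr1 (ht.trans hu)) _
        _ = ENNReal.ofReal (1 - α / n)⁻¹ * (f u * ENNReal.ofReal (phi n α u)) := by ring
end

section
/- Let V(r) = n ω_n ∫_0^r (sinh t)^{n−1} dt, where ω_n is the volume of the Euclidean unit ball, and let ϱ be its inverse. Then sinh(ϱ(t))^{1−n} ≍ min{t^{−1+1/n}, t^{−1}} for all t ∈ (0,∞), with constants depending only on n; in particular lim_{t→0⁺} sinh(ϱ(t))^{1−n}/t^{−1+1/n} = ω_n^{(n−1)/n} and lim_{t→∞} sinh(ϱ(t))^{1−n}/t^{−1} = nω_n/(n−1). -/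
open MeasureTheory Set Real Filter

noncomputable def auxF (m : ℕ) (r : ℝ) : ℝ := ∫ t in Ioo (0:ℝ) r, Real.sinh t ^ m

lemma auxII (m : ℕ) (a b : ℝ) : IntervalIntegrable (fun t => Real.sinh t ^ m) volume a b :=
  (Real.continuous_sinh.pow m).intervalIntegrable a b

lemma auxF_eq (m : ℕ) {r : ℝ} (hr : 0 ≤ r) :
    auxF m r = ∫ t in (0:ℝ)..r, Real.sinh t ^ m := by
  rw [intervalIntegral.integral_of_le hr, MeasureTheory.integral_Ioc_eq_integral_Ioo]
  rfl

lemma auxF_zero (m : ℕ) : auxF m 0 = 0 := by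
  simp [auxF]

lemma auxF_sub (m : ℕ) {a r : ℝ} (ha : 0 ≤ a) (har : a ≤ r) :
    auxF m r - auxF m a = ∫ t in a..r, Real.sinh t ^ m := by
  rw [auxF_eq m (ha.trans har), auxF_eq m ha,
    ← intervalIntegral.integral_add_adjacent_intervals (auxII m 0 a) (auxII m a r)]
  ring

lemma auxF_mono (m : ℕ) {a r : ℝ} (ha : 0 ≤ a) (har : a ≤ r) : auxF m a ≤ auxF m r := by
  have h := auxF_sub m ha har
  have h2 : 0 ≤ ∫ t in a..r, Real.sinh t ^ m := by
    apply intervalIntegral.integral_nonneg har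
    intro u hu
    exact pow_nonneg (Real.sinh_nonneg_iff.2 (ha.trans hu.1)) m
  linarith

lemma auxF_lower (m : ℕ) {r : ℝ} (hr : 0 ≤ r) :
    r ^ (m+1) / (m+1) ≤ auxF m r := by
  rw [auxF_eq m hr]
  have h1 : (∫ t in (0:ℝ)..r, t ^ m) = r ^ (m+1)/(m+1) := by
    rw [integral_pow]; simp
  rw [← h1]
  apply intervalIntegral.integral_mono_on hr ((continuous_pow m).intervalIntegrable 0 r) (auxII m 0 r)
  intro u hu
  exact pow_le_pow_left₀ hu.1 (Real.self_le_sinh_iff.2 hu.1) m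

lemma sinh_le_mul_cosh {x : ℝ} (hx : 0 ≤ x) : Real.sinh x ≤ x * Real.cosh x := by
  have key : ∀ y : ℝ, HasDerivAt (fun z => z * Real.cosh z - Real.sinh z) (y * Real.sinh y) y := by
    intro y
    have h1 := ((hasDerivAt_id y).mul (Real.hasDerivAt_cosh y)).sub (Real.hasDerivAt_sinh y)
    convert h1 using 1
    · rfl
    · rfl
    · rfl
    · simp only [id_eq]
      ring
  have mono : MonotoneOn (fun z => z * Real.cosh z - Real.sinh z) (Ici 0) := by
    apply monotoneOn_of_deriv_nonneg (convex_Ici 0) (Continuous.continuousOn (by continuity))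
    · intro y _
      exact (key y).differentiableAt.differentiableWithinAt
    · intro y hy
      rw [interior_Ici, mem_Ioi] at hy
      rw [(key y).deriv]
      exact mul_nonneg hy.le (Real.sinh_nonneg_iff.2 hy.le)
  have h := mono self_mem_Ici hx hx
  simp only [Real.cosh_zero, Real.sinh_zero, mul_one, zero_mul, sub_zero] at h
  linarith

lemma auxF_upper_small (m : ℕ) {r : ℝ} (hr : 0 ≤ r) :
    auxF m r ≤ Real.cosh r ^ m * (r ^ (m+1) / (m+1)) := by
  rw [auxF_eq m hr]
  have h1 : (∫ t in (0:ℝ)..r, Real.cosh r ^ m * t ^ m) = Real.cosh r ^ m * (r^(m+1)/(m+1)) := by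
    rw [intervalIntegral.integral_const_mul, integral_pow]; simp
  rw [← h1]
  apply intervalIntegral.integral_mono_on hr (auxII m 0 r)
    ((continuous_const.mul (continuous_pow m)).intervalIntegrable 0 r)
  intro u hu
  calc Real.sinh u ^ m ≤ (Real.cosh r * u) ^ m := by
        apply pow_le_pow_left₀ (Real.sinh_nonneg_iff.2 hu.1)
        calc Real.sinh u ≤ u * Real.cosh u := sinh_le_mul_cosh hu.1
          _ ≤ u * Real.cosh r := by
              apply mul_le_mul_of_nonneg_left _ hu.1
              exact Real.cosh_le_cosh.2 (by rw [abs_of_nonneg hu.1, abs_of_nonneg hr]; exact hu.2)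
          _ = Real.cosh r * u := mul_comm _ _
    _ = Real.cosh r ^ m * u ^ m := mul_pow _ _ _

lemma integral_sinh_pow_le (m : ℕ) {a r : ℝ} (har : a ≤ r) (φ φ' : ℝ → ℝ)
    (hd : ∀ t, HasDerivAt φ (φ' t) t) (hc : Continuous φ')
    (hle : ∀ t ∈ Icc a r, Real.sinh t ^ m ≤ φ' t) :
    (∫ t in a..r, Real.sinh t ^ m) ≤ φ r - φ a := by
  rw [← intervalIntegral.integral_eq_sub_of_hasDerivAt (fun t _ => hd t) (hc.intervalIntegrable a r)]
  exact intervalIntegral.integral_mono_on har (auxII m a r) (hc.intervalIntegrable a r) hle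

lemma le_integral_sinh_pow (m : ℕ) {a r : ℝ} (har : a ≤ r) (φ φ' : ℝ → ℝ)
    (hd : ∀ t, HasDerivAt φ (φ' t) t) (hc : Continuous φ')
    (hle : ∀ t ∈ Icc a r, φ' t ≤ Real.sinh t ^ m) :
    φ r - φ a ≤ ∫ t in a..r, Real.sinh t ^ m := by
  rw [← intervalIntegral.integral_eq_sub_of_hasDerivAt (fun t _ => hd t) (hc.intervalIntegrable a r)]
  exact intervalIntegral.integral_mono_on har (hc.intervalIntegrable a r) (auxII m a r) hle

lemma auxDeriv (m : ℕ) (c : ℝ) (t : ℝ) :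
    HasDerivAt (fun z => c * (Real.sinh z ^ (m+1) / (m+1)))
      (c * (Real.sinh t ^ m * Real.cosh t)) t := by
  have h := (((Real.hasDerivAt_sinh t).pow (m+1)).div_const (m+1)).const_mul c
  convert h using 1
  · rfl
  · rfl
  · rfl
  have : ((m:ℝ)+1) ≠ 0 := by positivity
  push_cast
  field_simp

lemma auxF_le_A (m : ℕ) {r : ℝ} (hr : 0 ≤ r) :
    auxF (m+1) r ≤ Real.sinh r ^ (m+1) / (m+1) := by
  rw [auxF_eq _ hr]
  have h := integral_sinh_pow_le (m+1) hr (fun z => 1 * (Real.sinh z ^ (m+1)/(m+1)))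
    (fun t => 1 * (Real.sinh t ^ m * Real.cosh t)) (auxDeriv m 1) (by continuity) ?_
  · simpa using h
  · intro u hu
    show Real.sinh u ^ (m+1) ≤ 1 * (Real.sinh u ^ m * Real.cosh u)
    rw [one_mul, pow_succ]
    exact mul_le_mul_of_nonneg_left (Real.sinh_lt_cosh u).le
      (pow_nonneg (Real.sinh_nonneg_iff.2 hu.1) m)

lemma auxF_le_B (m : ℕ) {r : ℝ} (hr : 0 ≤ r) :
    auxF (m+1) r ≤ Real.sinh r ^ (m+2) / (m+2) := by
  rw [auxF_eq _ hr]
  have h := integral_sinh_pow_le (m+1) hr (fun z => 1 * (Real.sinh z ^ (m+2) / (m+2)))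
    (fun t => 1 * (Real.sinh t ^ (m+1) * Real.cosh t))
    (by have := auxDeriv (m+1) 1; convert this using 3 <;> push_cast <;> ring) (by continuity) ?_
  · simpa using h
  · intro u hu
    show Real.sinh u ^ (m+1) ≤ 1 * (Real.sinh u ^ (m+1) * Real.cosh u)
    rw [one_mul]
    exact le_mul_of_one_le_right (pow_nonneg (Real.sinh_nonneg_iff.2 hu.1) (m+1))
      (Real.one_le_cosh u)

lemma auxF_lower_big (m : ℕ) {a r : ℝ} (ha : 0 ≤ a) (har : a ≤ r) :
    Real.sinh a / Real.cosh a * ((Real.sinh r ^ (m+1) - Real.sinh a ^ (m+1)) / (m+1))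
      ≤ auxF (m+1) r - auxF (m+1) a := by
  rw [auxF_sub _ ha har]
  have h := le_integral_sinh_pow (m+1) har
    (fun z => Real.sinh a / Real.cosh a * (Real.sinh z ^ (m+1) / (m+1)))
    (fun t => Real.sinh a / Real.cosh a * (Real.sinh t ^ m * Real.cosh t))
    (auxDeriv m _) (by continuity) ?_
  · calc _ = _ := by ring
    _ ≤ _ := h
  · intro u hu
    have h1 : Real.sinh a * Real.cosh u ≤ Real.sinh u * Real.cosh a := by
      have : (0:ℝ) ≤ Real.sinh (u - a) := Real.sinh_nonneg_iff.2 (sub_nonneg.2 hu.1)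
      rw [Real.sinh_sub] at this
      linarith
    have h2 : Real.sinh a / Real.cosh a * Real.cosh u ≤ Real.sinh u := by
      rw [div_mul_eq_mul_div, div_le_iff₀ (Real.cosh_pos a)]
      linarith
    calc Real.sinh a / Real.cosh a * (Real.sinh u ^ m * Real.cosh u)
        = Real.sinh u ^ m * (Real.sinh a / Real.cosh a * Real.cosh u) := by ring
      _ ≤ Real.sinh u ^ m * Real.sinh u := by
          apply mul_le_mul_of_nonneg_left h2 (pow_nonneg (Real.sinh_nonneg_iff.2 (ha.trans hu.1)) m)
      _ = Real.sinh u ^ (m+1) := (pow_succ _ _).symm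

lemma aux_sinh_div : Tendsto (fun r : ℝ => Real.sinh r / r) (nhdsWithin 0 (Ioi 0)) (nhds 1) := by
  have h := hasDerivAt_iff_tendsto_slope.1 (Real.hasDerivAt_sinh 0)
  rw [Real.cosh_zero] at h
  have h2 := h.mono_left (nhdsWithin_mono 0 (fun x (hx : x ∈ Ioi 0) => ne_of_gt hx))
  refine h2.congr (fun x => ?_)
  simp [slope_def_field, Real.sinh_zero]

lemma aux_div_sinh : Tendsto (fun r : ℝ => r / Real.sinh r) (nhdsWithin 0 (Ioi 0)) (nhds 1) := by
  have h := (aux_sinh_div.inv₀ one_ne_zero)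
  simp only [inv_one] at h
  refine h.congr (fun x => ?_)
  rw [inv_div]

lemma aux_tanh : Tendsto (fun r : ℝ => Real.sinh r / Real.cosh r) atTop (nhds 1) := by
  have key : ∀ x : ℝ, Real.sinh x / Real.cosh x
      = (1 - Real.exp (-(2*x))) / (1 + Real.exp (-(2*x))) := by
    intro x
    rw [Real.sinh_eq, Real.cosh_eq]
    have h2 : Real.exp (-(2*x)) = Real.exp (-x) * Real.exp (-x) := by
      rw [← Real.exp_add]; ring_nf
    have h3 : Real.exp (-x) * Real.exp x = 1 := by rw [← Real.exp_add]; simp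
    have hden : (0:ℝ) < 1 + Real.exp (-(2*x)) := by positivity
    have hd2 : (0:ℝ) < Real.exp x + Real.exp (-x) := by positivity
    rw [div_eq_div_iff (by positivity) hden.ne']
    rw [h2]
    nlinarith [Real.exp_pos x, Real.exp_pos (-x)]
  have e1 : Tendsto (fun x : ℝ => Real.exp (-(2*x))) atTop (nhds 0) := by
    apply Real.tendsto_exp_neg_atTop_nhds_zero.comp
    exact (tendsto_id.const_mul_atTop two_pos)
  have h : Tendsto (fun x : ℝ => (1 - Real.exp (-(2*x))) / (1 + Real.exp (-(2*x)))) atTop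
      (nhds ((1 - 0) / (1 + 0))) :=
    (tendsto_const_nhds.sub e1).div (tendsto_const_nhds.add e1) (by norm_num)
  have h2 : ((1:ℝ) - 0) / (1 + 0) = 1 := by norm_num
  rw [h2] at h
  exact h.congr (fun x => (key x).symm)

lemma aux_cosh_top : Tendsto Real.cosh atTop atTop := by
  apply tendsto_atTop_mono (fun x => ?_) (Real.tendsto_exp_atTop.atTop_div_const two_pos)
  rw [Real.cosh_eq]
  have := Real.exp_pos (-x)
  linarith

lemma aux_half : Tendsto (fun r : ℝ => r / 2) atTop atTop :=
  tendsto_id.atTop_div_const two_pos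

lemma aux_sinh_half : Tendsto (fun r : ℝ => Real.sinh (r/2) / Real.sinh r) atTop (nhds 0) := by
  have key : ∀ᶠ r : ℝ in atTop, Real.sinh (r/2) / Real.sinh r = (2 * Real.cosh (r/2))⁻¹ := by
    filter_upwards [eventually_gt_atTop (0:ℝ)] with r hr
    have hs : Real.sinh (r/2) ≠ 0 := (Real.sinh_pos_iff.2 (by linarith)).ne'
    have h2 : Real.sinh r = 2 * Real.sinh (r/2) * Real.cosh (r/2) := by
      rw [← Real.sinh_two_mul]; ring_nf
    rw [h2]
    field_simp
  have h : Tendsto (fun r : ℝ => (2 * Real.cosh (r/2))⁻¹) atTop (nhds 0) := by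
    apply Tendsto.inv_tendsto_atTop
    exact (aux_cosh_top.comp aux_half).const_mul_atTop two_pos
  exact Tendsto.congr' (key.mono (fun r hr => hr.symm)) h

lemma aux_psi (k : ℕ) (ω : ℝ) (hω : 0 < ω) :
    Tendsto (fun r : ℝ => ((k:ℝ)+2) * ω * auxF (k+1) r / Real.sinh r ^ (k+2))
      (nhdsWithin 0 (Ioi 0)) (nhds ω) := by
  have hlow : Tendsto (fun r : ℝ => ω * (r / Real.sinh r) ^ (k+2)) (nhdsWithin 0 (Ioi 0))
      (nhds (ω * 1 ^ (k+2))) := tendsto_const_nhds.mul (aux_div_sinh.pow (k+2))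
  have hup : Tendsto (fun r : ℝ => ω * Real.cosh r ^ (k+1) * (r / Real.sinh r) ^ (k+2))
      (nhdsWithin 0 (Ioi 0)) (nhds (ω * Real.cosh 0 ^ (k+1) * 1 ^ (k+2))) :=
    (tendsto_const_nhds.mul
      (((Real.continuous_cosh.tendsto 0).mono_left nhdsWithin_le_nhds).pow (k+1))).mul
      (aux_div_sinh.pow (k+2))
  rw [show ω * (1:ℝ) ^ (k+2) = ω by norm_num] at hlow
  rw [show ω * Real.cosh 0 ^ (k+1) * (1:ℝ) ^ (k+2) = ω by simp] at hup
  apply tendsto_of_tendsto_of_tendsto_of_le_of_le' hlow hup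
  · filter_upwards [self_mem_nhdsWithin] with r (hr : 0 < r)
    have hs : 0 < Real.sinh r := Real.sinh_pos_iff.2 hr
    have hl := auxF_lower (k+1) hr.le
    push_cast at hl
    have e : ω * (r/Real.sinh r)^(k+2) = ω * r^(k+2) / Real.sinh r^(k+2) := by
      rw [div_pow]; ring
    rw [e, div_le_div_iff₀ (pow_pos hs _) (pow_pos hs _)]
    have key : ω * r ^ (k+2) ≤ ((k:ℝ)+2) * ω * auxF (k+1) r := by
      calc ω * r^(k+2) = (((k:ℝ)+2)*ω) * (r^(k+2)/((k:ℝ)+2)) := by field_simp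
        _ ≤ (((k:ℝ)+2)*ω) * auxF (k+1) r := by
            apply mul_le_mul_of_nonneg_left _ (by positivity)
            convert hl using 2
            · rfl
            ring
        _ = ((k:ℝ)+2) * ω * auxF (k+1) r := by ring
    nlinarith [pow_pos hs (k+2)]
  · filter_upwards [self_mem_nhdsWithin] with r (hr : 0 < r)
    have hs : 0 < Real.sinh r := Real.sinh_pos_iff.2 hr
    have hu := auxF_upper_small (k+1) hr.le
    push_cast at hu
    have e : ω * Real.cosh r^(k+1) * (r/Real.sinh r)^(k+2)
        = ω * (Real.cosh r^(k+1) * r^(k+2)) / Real.sinh r^(k+2) := by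
      rw [div_pow]; ring
    rw [e, div_le_div_iff₀ (pow_pos hs _) (pow_pos hs _)]
    have key : ((k:ℝ)+2) * ω * auxF (k+1) r ≤ ω * (Real.cosh r^(k+1) * r^(k+2)) := by
      calc ((k:ℝ)+2) * ω * auxF (k+1) r
          ≤ ((k:ℝ)+2) * ω * (Real.cosh r^(k+1) * (r^(k+2)/((k:ℝ)+2))) := by
            apply mul_le_mul_of_nonneg_left _ (by positivity)
            convert hu using 3
            · rfl
            ring
        _ = ω * (Real.cosh r^(k+1) * r^(k+2)) := by field_simp
    nlinarith [pow_pos hs (k+2)]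

lemma aux_chi (k : ℕ) (ω : ℝ) (hω : 0 < ω) :
    Tendsto (fun r : ℝ => ((k:ℝ)+2) * ω * auxF (k+1) r / Real.sinh r ^ (k+1))
      atTop (nhds (((k:ℝ)+2) * ω / ((k:ℝ)+1))) := by
  have hL : Tendsto (fun r : ℝ => ((k:ℝ)+2)*ω * (Real.sinh (r/2)/Real.cosh (r/2) *
      ((1 - (Real.sinh (r/2)/Real.sinh r)^(k+1)) / ((k:ℝ)+1)))) atTop
      (nhds (((k:ℝ)+2)*ω * (1 * ((1 - 0)/((k:ℝ)+1))))) := by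
    apply tendsto_const_nhds.mul
    apply (aux_tanh.comp aux_half).mul
    apply Tendsto.div_const
    apply tendsto_const_nhds.sub
    have h := aux_sinh_half.pow (k+1)
    simpa using h
  rw [show (((k:ℝ)+2)*ω*(1*((1-0)/((k:ℝ)+1)))) = ((k:ℝ)+2)*ω/((k:ℝ)+1) by ring] at hL
  apply tendsto_of_tendsto_of_tendsto_of_le_of_le' hL tendsto_const_nhds
  · filter_upwards [eventually_ge_atTop (2:ℝ)] with r hr
    have h2 : (0:ℝ) < r/2 := by linarith
    have h2' : r/2 ≤ r := by linarith
    have hs : 0 < Real.sinh r := Real.sinh_pos_iff.2 (by linarith)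
    have hs2 : 0 < Real.sinh (r/2) := Real.sinh_pos_iff.2 h2
    have hc2 : 0 < Real.cosh (r/2) := Real.cosh_pos _
    have hTD : Real.sinh (r/2)/Real.cosh (r/2) *
        ((Real.sinh r^(k+1) - Real.sinh (r/2)^(k+1))/((k:ℝ)+1)) ≤ auxF (k+1) r := by
      have hb := auxF_lower_big k h2.le h2'
      have h0 : 0 ≤ auxF (k+1) (r/2) := by
        have := auxF_mono (k+1) (le_refl 0) h2.le
        rwa [auxF_zero] at this
      push_cast at hb
      linarith
    have e : ((k:ℝ)+2)*ω * (Real.sinh (r/2)/Real.cosh (r/2) *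
        ((1 - (Real.sinh (r/2)/Real.sinh r)^(k+1)) / ((k:ℝ)+1)))
        = (((k:ℝ)+2)*ω * (Real.sinh (r/2)/Real.cosh (r/2) *
          ((Real.sinh r^(k+1) - Real.sinh (r/2)^(k+1))/((k:ℝ)+1)))) / Real.sinh r^(k+1) := by
      rw [div_pow, eq_div_iff (pow_ne_zero _ hs.ne')]
      field_simp
    rw [e, div_le_div_iff₀ (pow_pos hs _) (pow_pos hs _)]
    have h3 := mul_le_mul_of_nonneg_left hTD (show (0:ℝ) ≤ ((k:ℝ)+2)*ω by positivity)
    nlinarith [pow_pos hs (k+1)]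
  · filter_upwards [eventually_ge_atTop (1:ℝ)] with r hr
    have hs : 0 < Real.sinh r := Real.sinh_pos_iff.2 (by linarith)
    have hu := auxF_le_A k (by linarith : (0:ℝ) ≤ r)
    push_cast at hu
    calc ((k:ℝ)+2) * ω * auxF (k+1) r / Real.sinh r ^ (k+1)
        ≤ ((k:ℝ)+2) * ω * (Real.sinh r^(k+1)/((k:ℝ)+1)) / Real.sinh r ^ (k+1) := by
          rw [div_le_div_iff_of_pos_right (pow_pos hs _)]
          exact mul_le_mul_of_nonneg_left hu (by positivity)
      _ = ((k:ℝ)+2) * ω / ((k:ℝ)+1) := by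
          rw [div_eq_div_iff (pow_ne_zero _ hs.ne') (by positivity : ((k:ℝ)+1) ≠ 0)]
          field_simp

lemma aux_inv_le {a b c : ℝ} (ha : 0 < a) (hb : 0 < b) (hc : 0 < c) (h : b ≤ c * a) :
    a⁻¹ ≤ c * b⁻¹ := by
  have h1 : (c*a)⁻¹ ≤ b⁻¹ := by
    apply inv_anti₀ hb h
  rw [mul_inv] at h1
  calc a⁻¹ = c * (c⁻¹ * a⁻¹) := by field_simp
    _ ≤ c * b⁻¹ := mul_le_mul_of_nonneg_left h1 hc.le

lemma aux_pow_rpow {s : ℝ} (hs : 0 < s) (k : ℕ) :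
    ((s ^ (k+2) : ℝ)) ^ (((k:ℝ)+1)/((k:ℝ)+2)) = s ^ (k+1) := by
  rw [← Real.rpow_natCast s (k+2), ← Real.rpow_mul hs.le]
  rw [show ((k+2:ℕ):ℝ) * (((k:ℝ)+1)/((k:ℝ)+2)) = ((k+1:ℕ):ℝ) by push_cast; field_simp]
  rw [Real.rpow_natCast]

set_option maxHeartbeats 1000000 in
theorem stmt11 (n : ℕ) (hn : 2 ≤ n) (ω : ℝ)
    (hω : ω = (volume (Metric.ball (0 : EuclideanSpace ℝ (Fin n)) 1)).toReal)
    (V ϱ : ℝ → ℝ)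
    (hV : ∀ r : ℝ, V r = n * ω * ∫ t in Ioo (0 : ℝ) r, Real.sinh t ^ (n - 1))
    (hϱ1 : ∀ r : ℝ, 0 ≤ r → ϱ (V r) = r)
    (hϱ2 : ∀ t : ℝ, 0 ≤ t → 0 ≤ ϱ t ∧ V (ϱ t) = t) :
    (∃ c C : ℝ, 0 < c ∧ 0 < C ∧ ∀ t : ℝ, 0 < t →
      c * min (t ^ (-1 + 1 / (n : ℝ))) t⁻¹ ≤ Real.sinh (ϱ t) ^ ((1 : ℝ) - n) ∧
      Real.sinh (ϱ t) ^ ((1 : ℝ) - n) ≤ C * min (t ^ (-1 + 1 / (n : ℝ))) t⁻¹) ∧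
    Tendsto (fun t : ℝ => Real.sinh (ϱ t) ^ ((1 : ℝ) - n) / t ^ (-1 + 1 / (n : ℝ)))
      (nhdsWithin 0 (Ioi 0)) (nhds (ω ^ (((n : ℝ) - 1) / n))) ∧
    Tendsto (fun t : ℝ => Real.sinh (ϱ t) ^ ((1 : ℝ) - n) / t⁻¹)
      atTop (nhds ((n : ℝ) * ω / ((n : ℝ) - 1))) := by
  obtain ⟨k, rfl⟩ : ∃ k, n = k + 2 := ⟨n - 2, by omega⟩
  clear hn
  have hωpos : 0 < ω := by
    rw [hω]
    refine ENNReal.toReal_pos (ne_of_gt ?_) (ne_of_lt ?_)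
    · exact Metric.measure_ball_pos _ _ one_pos
    · exact MeasureTheory.measure_ball_lt_top
  have hVF : ∀ r : ℝ, V r = ((k:ℝ)+2) * ω * auxF (k+1) r := by
    intro r
    rw [hV r, show k+2-1 = k+1 from by omega]
    push_cast
    rfl
  have key : ∀ t : ℝ, 0 < t → 0 < ϱ t ∧ ((k:ℝ)+2) * ω * auxF (k+1) (ϱ t) = t := by
    intro t ht
    obtain ⟨h1, h2⟩ := hϱ2 t ht.le
    have h3 : ((k:ℝ)+2) * ω * auxF (k+1) (ϱ t) = t := by rw [← hVF]; exact h2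
    refine ⟨?_, h3⟩
    rcases lt_or_eq_of_le h1 with h|h
    · exact h
    · exfalso
      rw [← h, auxF_zero] at h3
      simp at h3
      linarith
  -- ϱ tends to 0 within Ioi 0
  have hρ0 : Tendsto ϱ (nhdsWithin 0 (Ioi 0)) (nhdsWithin 0 (Ioi 0)) := by
    rw [tendsto_nhdsWithin_iff]
    constructor
    · rw [tendsto_order]
      constructor
      · intro a ha
        filter_upwards [self_mem_nhdsWithin] with t (ht : t ∈ Ioi 0)
        exact lt_of_lt_of_le ha (hϱ2 t (le_of_lt ht)).1
      · intro a ha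
        have hVa : 0 < V a := by
          rw [hVF]
          have h1 := auxF_lower (k+1) ha.le
          have h2 : (0:ℝ) < a ^ (k+1+1) / ((k+1:ℕ)+1 : ℝ) := by positivity
          have h4 : 0 < auxF (k+1) a := lt_of_lt_of_le h2 h1
          positivity
        filter_upwards [Ioo_mem_nhdsGT_of_mem (Set.mem_Ico.2 ⟨le_refl (0:ℝ), hVa⟩)]
          with t ht
        by_contra hc
        push_neg at hc
        have h1 := auxF_mono (k+1) ha.le hc
        have h2 := mul_le_mul_of_nonneg_left h1
          (show (0:ℝ) ≤ ((k:ℝ)+2)*ω by positivity)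
        rw [(key t ht.1).2] at h2
        rw [hVF] at ht
        have := ht.2
        linarith [h2, this]
    · filter_upwards [self_mem_nhdsWithin] with t (ht : t ∈ Ioi 0)
      exact (key t ht).1
  -- ϱ tends to atTop
  have hρtop : Tendsto ϱ atTop atTop := by
    rw [tendsto_atTop]
    intro b
    filter_upwards [eventually_gt_atTop (max (V (max b 0)) 0)] with t ht
    have ht0 : 0 < t := lt_of_le_of_lt (le_max_right _ _) ht
    by_contra hc
    push_neg at hc
    have h1 : auxF (k+1) (ϱ t) ≤ auxF (k+1) (max b 0) :=
      auxF_mono _ (hϱ2 t ht0.le).1 (le_trans hc.le (le_max_left _ _))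
    have h2 := mul_le_mul_of_nonneg_left h1
      (show (0:ℝ) ≤ ((k:ℝ)+2)*ω by positivity)
    rw [(key t ht0).2, ← hVF] at h2
    have h3 := le_max_left (V (max b 0)) 0
    linarith
  refine ⟨?_, ?_, ?_⟩
  -- Part 1 : two-sided bounds
  · set q : ℝ := ((k:ℝ)+1)/((k:ℝ)+2) with hq
    have hq0 : (0:ℝ) ≤ q := by positivity
    have hs1 : (0:ℝ) < Real.sinh 1 := Real.sinh_pos_iff.2 one_pos
    have hc1 : (0:ℝ) < Real.cosh 1 := Real.cosh_pos 1
    have hωq : (0:ℝ) < ω ^ q := Real.rpow_pos_of_pos hωpos q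
    set S1 : ℝ := Real.sinh 1 ^ (k+1) with hS1
    have hS1p : 0 < S1 := pow_pos hs1 _
    set D₁ : ℝ := Real.cosh 1 ^ (k+1) * (ω ^ q)⁻¹ with hD₁
    set D₂ : ℝ := (S1 * (((k:ℝ)+2) * Real.sinh 1) + ((k:ℝ)+1)*Real.cosh 1) /
        (((k:ℝ)+2)*ω*Real.sinh 1) with hD₂
    have hD₁p : 0 < D₁ := by positivity
    have hD₂p : 0 < D₂ := by positivity
    refine ⟨min D₁⁻¹ D₂⁻¹, max (ω ^ q) (((k:ℝ)+2)*ω/((k:ℝ)+1)), by positivity,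
      by positivity, ?_⟩
    intro t ht
    obtain ⟨hr, hF⟩ := key t ht
    have hs : 0 < Real.sinh (ϱ t) := Real.sinh_pos_iff.2 hr
    set r := ϱ t with hrdef
    set X : ℝ := Real.sinh r ^ (k+1) with hX
    have hXpos : 0 < X := pow_pos hs _
    have htq : 0 < t ^ q := Real.rpow_pos_of_pos ht q
    have e1 : Real.sinh r ^ ((1:ℝ) - ((k+2:ℕ):ℝ)) = X⁻¹ := by
      rw [show (1:ℝ) - ((k+2:ℕ):ℝ) = -((k+1:ℕ):ℝ) by push_cast; ring,
        Real.rpow_neg hs.le, Real.rpow_natCast]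
    have e2 : t ^ (-1 + 1/((k+2:ℕ):ℝ)) = (t ^ q)⁻¹ := by
      rw [show (-1 + 1/((k+2:ℕ):ℝ)) = -q by rw [hq]; push_cast; field_simp; ring,
        Real.rpow_neg ht.le]
    have hA := auxF_le_A k hr.le
    have hB := auxF_le_B k hr.le
    have hLow := auxF_lower (k+1) hr.le
    push_cast at hA hB hLow
    -- t ≤ ω * sinh r ^ (k+2)
    have ht1 : t ≤ ω * Real.sinh r ^ (k+2) := by
      rw [← hF]
      calc ((k:ℝ)+2)*ω*auxF (k+1) r
          ≤ ((k:ℝ)+2)*ω*(Real.sinh r^(k+2)/((k:ℝ)+2)) :=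
            mul_le_mul_of_nonneg_left hB (by positivity)
        _ = ω * Real.sinh r^(k+2) := by field_simp
    -- t ≤ ((k+2)ω/(k+1)) * X
    have ht2 : t ≤ (((k:ℝ)+2)*ω/((k:ℝ)+1)) * X := by
      rw [← hF]
      calc ((k:ℝ)+2)*ω*auxF (k+1) r
          ≤ ((k:ℝ)+2)*ω*(X/((k:ℝ)+1)) := mul_le_mul_of_nonneg_left hA (by positivity)
        _ = (((k:ℝ)+2)*ω/((k:ℝ)+1)) * X := by field_simp
    -- ω * r^(k+2) ≤ t
    have ht3 : ω * r^(k+2) ≤ t := by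
      rw [← hF]
      calc ω * r^(k+2) = ((k:ℝ)+2)*ω*(r^(k+2)/((k:ℝ)+2)) := by field_simp
        _ ≤ ((k:ℝ)+2)*ω*auxF (k+1) r := by
            apply mul_le_mul_of_nonneg_left _ (by positivity)
            convert hLow using 2
            · rfl
            ring
    -- rpow consequence : t^q ≤ ω^q * X
    have hupq : t ^ q ≤ ω ^ q * X := by
      calc t ^ q ≤ (ω * Real.sinh r^(k+2)) ^ q := Real.rpow_le_rpow ht.le ht1 hq0
        _ = ω ^ q * (Real.sinh r^(k+2)) ^ q :=
            Real.mul_rpow hωpos.le (by positivity)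
        _ = ω ^ q * X := by rw [aux_pow_rpow hs k]
    -- rpow consequence : ω^q * r^(k+1) ≤ t^q
    have hlowq : ω ^ q * r^(k+1) ≤ t ^ q := by
      calc ω ^ q * r^(k+1) = ω ^ q * (r^(k+2)) ^ q := by rw [aux_pow_rpow hr k]
        _ = (ω * r^(k+2)) ^ q := (Real.mul_rpow hωpos.le (by positivity)).symm
        _ ≤ t ^ q := Real.rpow_le_rpow (by positivity) ht3 hq0
    rw [e1, e2]
    constructor
    · -- lower bound
      have main : X ≤ D₁ * t ^ q ∨ X ≤ D₂ * t := by
        rcases le_total r 1 with hcase|hcase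
        · left
          have hsr : Real.sinh r ≤ r * Real.cosh 1 := by
            calc Real.sinh r ≤ r * Real.cosh r := sinh_le_mul_cosh hr.le
              _ ≤ r * Real.cosh 1 := by
                  apply mul_le_mul_of_nonneg_left _ hr.le
                  exact Real.cosh_le_cosh.2
                    (by rw [abs_of_nonneg hr.le, abs_of_nonneg zero_le_one]; exact hcase)
          calc X ≤ (r * Real.cosh 1)^(k+1) := pow_le_pow_left₀ hs.le hsr (k+1)
            _ = Real.cosh 1^(k+1) * r^(k+1) := by ring
            _ ≤ Real.cosh 1^(k+1) * ((ω ^ q)⁻¹ * t ^ q) := by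
                apply mul_le_mul_of_nonneg_left _ (by positivity)
                rw [le_inv_mul_iff₀ hωq]
                exact hlowq
            _ = D₁ * t ^ q := by rw [hD₁]; ring
        · right
          have hb := auxF_lower_big k zero_le_one hcase
          push_cast at hb
          have h0 : 0 ≤ auxF (k+1) 1 := by
            have := auxF_mono (k+1) (le_refl 0) zero_le_one
            rwa [auxF_zero] at this
          have hb2 : Real.sinh 1 * (X - S1) / (Real.cosh 1 * ((k:ℝ)+1))
              ≤ auxF (k+1) r := by
            rw [← div_mul_div_comm]
            linarith
          rw [div_le_iff₀ (by positivity)] at hb2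
          -- G1 : sinh1 * (X - S1) * ((k+2)*ω) ≤ t * cosh1 * (k+1)
          have G1 : Real.sinh 1 * (X - S1) * (((k:ℝ)+2)*ω)
              ≤ t * (Real.cosh 1 * ((k:ℝ)+1)) := by
            have := mul_le_mul_of_nonneg_right hb2
              (show (0:ℝ) ≤ ((k:ℝ)+2)*ω by positivity)
            calc Real.sinh 1 * (X - S1) * (((k:ℝ)+2)*ω)
                ≤ auxF (k+1) r * (Real.cosh 1 * ((k:ℝ)+1)) * (((k:ℝ)+2)*ω) := this
              _ = (((k:ℝ)+2)*ω*auxF (k+1) r) * (Real.cosh 1 * ((k:ℝ)+1)) := by ring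
              _ = t * (Real.cosh 1 * ((k:ℝ)+1)) := by rw [hF]
          have hω_le_t : ω ≤ t := by
            have h1 : (1:ℝ) ≤ r^(k+2) := one_le_pow₀ hcase
            have h2 := mul_le_mul_of_nonneg_left h1 hωpos.le
            rw [mul_one] at h2
            linarith
          have G2 := mul_le_mul_of_nonneg_left hω_le_t
            (show (0:ℝ) ≤ S1 * (((k:ℝ)+2) * Real.sinh 1) by positivity)
          rw [hD₂, div_mul_eq_mul_div, le_div_iff₀ (by positivity)]
          nlinarith [G1, G2]
      have hminpos : 0 ≤ min ((t^q)⁻¹) t⁻¹ := le_min (by positivity) (by positivity)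
      rcases main with hm|hm
      · calc min D₁⁻¹ D₂⁻¹ * min ((t^q)⁻¹) t⁻¹
            ≤ D₁⁻¹ * (t^q)⁻¹ := mul_le_mul (min_le_left _ _) (min_le_left _ _)
              hminpos (by positivity)
          _ ≤ X⁻¹ := by
              rw [← mul_inv]
              exact inv_anti₀ hXpos hm
      · calc min D₁⁻¹ D₂⁻¹ * min ((t^q)⁻¹) t⁻¹
            ≤ D₂⁻¹ * t⁻¹ := mul_le_mul (min_le_right _ _) (min_le_right _ _)
              hminpos (by positivity)
          _ ≤ X⁻¹ := by
              rw [← mul_inv]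
              exact inv_anti₀ hXpos hm
    · -- upper bound
      have u1 : X⁻¹ ≤ ω ^ q * (t^q)⁻¹ :=
        aux_inv_le hXpos htq hωq hupq
      have u2 : X⁻¹ ≤ (((k:ℝ)+2)*ω/((k:ℝ)+1)) * t⁻¹ :=
        aux_inv_le hXpos ht (by positivity) ht2
      set C : ℝ := max (ω ^ q) (((k:ℝ)+2)*ω/((k:ℝ)+1)) with hC
      rcases le_total ((t^q)⁻¹) t⁻¹ with hmin|hmin
      · rw [min_eq_left hmin]
        calc X⁻¹ ≤ ω ^ q * (t^q)⁻¹ := u1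
          _ ≤ C * (t^q)⁻¹ :=
            mul_le_mul_of_nonneg_right (le_max_left _ _) (by positivity)
      · rw [min_eq_right hmin]
        calc X⁻¹ ≤ (((k:ℝ)+2)*ω/((k:ℝ)+1)) * t⁻¹ := u2
          _ ≤ C * t⁻¹ :=
            mul_le_mul_of_nonneg_right (le_max_right _ _) (by positivity)
  -- Part 2 : limit at 0
  · have hψ := (aux_psi k ω hωpos).comp hρ0
    set q : ℝ := ((k:ℝ)+1)/((k:ℝ)+2) with hq
    have h2 : Tendsto (fun t => ((((k:ℝ)+2) * ω * auxF (k+1) (ϱ t)) / Real.sinh (ϱ t) ^ (k+2)) ^ q)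
        (nhdsWithin 0 (Ioi 0)) (nhds (ω ^ q)) := by
      apply Filter.Tendsto.rpow_const _ (Or.inl hωpos.ne')
      exact hψ
    rw [show ((((k+2:ℕ)):ℝ) - 1)/((k+2:ℕ):ℝ) = q by rw [hq]; push_cast; ring]
    apply h2.congr'
    filter_upwards [self_mem_nhdsWithin] with t (ht : t ∈ Ioi 0)
    obtain ⟨hr, hF⟩ := key t ht
    have hs : 0 < Real.sinh (ϱ t) := Real.sinh_pos_iff.2 hr
    rw [hF, Real.div_rpow (le_of_lt ht) (by positivity), aux_pow_rpow hs k]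
    rw [show (1:ℝ) - ((k+2:ℕ):ℝ) = -((k+1:ℕ):ℝ) by push_cast; ring,
      Real.rpow_neg hs.le, Real.rpow_natCast,
      show (-1 + 1/((k+2:ℕ):ℝ)) = -q by rw [hq]; push_cast; field_simp; ring,
      Real.rpow_neg (le_of_lt ht)]
    have h4 : (0:ℝ) < t := ht
    have h6 : (t:ℝ) ^ q ≠ 0 := (Real.rpow_pos_of_pos h4 q).ne'
    have h5 : Real.sinh (ϱ t) ^ (k+1) ≠ 0 := pow_ne_zero _ hs.ne'
    field_simp
  -- Part 3 : limit at infinity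
  · have hχ := (aux_chi k ω hωpos).comp hρtop
    rw [show ((((k+2:ℕ)):ℝ)) * ω / (((k+2:ℕ):ℝ) - 1) = ((k:ℝ)+2) * ω / ((k:ℝ)+1)
      by push_cast; ring]
    apply hχ.congr'
    filter_upwards [eventually_gt_atTop (0:ℝ)] with t ht
    obtain ⟨hr, hF⟩ := key t ht
    have hs : 0 < Real.sinh (ϱ t) := Real.sinh_pos_iff.2 hr
    simp only [Function.comp_apply]
    rw [hF]
    rw [show (1:ℝ) - ((k+2:ℕ):ℝ) = -((k+1:ℕ):ℝ) by push_cast; ring, Real.rpow_neg hs.le,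
      Real.rpow_natCast]
    have h5 : Real.sinh (ϱ t) ^ (k+1) ≠ 0 := pow_ne_zero _ hs.ne'
    field_simp
end

section
/- With V and ϱ as above, t·sinh(ϱ(t))^{2−2n} ≍ min{t^{−1+2/n}, t^{−1}} for all t ∈ (0,∞), with constants depending only on n. -/
open MeasureTheory Set Real


lemma core (n : ℕ) (hn : 2 ≤ n) (ω t s : ℝ) (hω : 0 < ω) (ht : 0 < t) (hs : 0 < s)
    (hA : ω * s ^ n ≤ t * (1 + s))
    (hB : t ≤ ω * s ^ n)
    (hC : t ≤ 2 * ω * s ^ (n - 1)) :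
    min ((ω/2) ^ ((2*(n:ℝ)-2)/n)) ((ω/2)^2) * min (t ^ (-1 + 2 / (n : ℝ))) t⁻¹
      ≤ t * s ^ ((2 : ℝ) - 2 * n) ∧
    t * s ^ ((2 : ℝ) - 2 * n)
      ≤ max (ω ^ ((2*(n:ℝ)-2)/n)) (4*ω^2) * min (t ^ (-1 + 2 / (n : ℝ))) t⁻¹ := by
  have hn0 : (0:ℝ) < n := by exact_mod_cast Nat.lt_of_lt_of_le (by norm_num) hn
  set α : ℝ := (2*(n:ℝ)-2)/n with hαdef
  set β : ℝ := 2*(n:ℝ)-2 with hβdef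
  have hβ0 : 0 < β := by
    have : (2:ℝ) ≤ n := by exact_mod_cast hn
    simp only [hβdef]; linarith
  have hα0 : 0 < α := div_pos hβ0 hn0
  have hexp : -1 + 2/(n:ℝ) = 1 - α := by
    have h : α = 2 - 2/(n:ℝ) := by
      rw [hαdef, hβdef, div_eq_iff hn0.ne']
      field_simp
    rw [h]; ring
  have hsβpos : 0 < s ^ β := Real.rpow_pos_of_pos hs _
  have hsgoal : s ^ ((2:ℝ) - 2*n) = (s ^ β)⁻¹ := by
    rw [show (2:ℝ) - 2*(n:ℝ) = -β from by rw [hβdef]; ring, Real.rpow_neg hs.le]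
  have hsn : s ^ n = s ^ (n:ℝ) := (Real.rpow_natCast s n).symm
  have hnm1 : ((n - 1 : ℕ) : ℝ) = (n:ℝ) - 1 := by
    have h1 : (1:ℕ) ≤ n := by omega
    push_cast [h1]; ring
  have hsq : s ^ (n-1) * s ^ (n-1) = s ^ β := by
    rw [← pow_add, ← Real.rpow_natCast s (n - 1 + (n - 1))]
    congr 1
    push_cast [show (1:ℕ) ≤ n from by omega]
    rw [hβdef]; ring
  have hnα : (n:ℝ) * α = β := by rw [hαdef, mul_div_cancel₀ _ hn0.ne']
  -- key multiplicative facts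
  have key1 : t ^ α ≤ ω ^ α * s ^ β := by
    calc t ^ α ≤ (ω * s ^ (n:ℝ)) ^ α :=
          Real.rpow_le_rpow ht.le (hsn ▸ hB) hα0.le
    _ = ω ^ α * (s ^ (n:ℝ)) ^ α := Real.mul_rpow hω.le (Real.rpow_nonneg hs.le _)
    _ = ω ^ α * s ^ β := by rw [← Real.rpow_mul hs.le, hnα]
  have key2 : t * t ≤ 4 * ω^2 * s ^ β := by
    have h := mul_le_mul hC hC ht.le (by positivity)
    calc t * t ≤ (2*ω*s^(n-1)) * (2*ω*s^(n-1)) := h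
    _ = 4*ω^2 * (s^(n-1) * s^(n-1)) := by ring
    _ = 4*ω^2 * s ^ β := by rw [hsq]
  have htαpos : 0 < t ^ α := Real.rpow_pos_of_pos ht _
  -- rewrite t^(1-α) as t / t^α
  have ht1α : t ^ ((1:ℝ) - α) = t / t ^ α := by
    rw [Real.rpow_sub ht, Real.rpow_one]
  rw [hsgoal, hexp]
  rw [show t * (s ^ β)⁻¹ = t / s ^ β from rfl]
  constructor
  · -- lower bound
    rcases le_total s 1 with hs1 | hs1
    · -- small s : ω/2 * s^n ≤ t
      have hA' : ω/2 * s ^ (n:ℝ) ≤ t := by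
        rw [← hsn]; nlinarith
      have key3 : (ω/2) ^ α * s ^ β ≤ t ^ α := by
        calc (ω/2) ^ α * s ^ β = (ω/2 * s ^ (n:ℝ)) ^ α := by
              rw [Real.mul_rpow (by positivity) (Real.rpow_nonneg hs.le _),
                ← Real.rpow_mul hs.le, hnα]
        _ ≤ t ^ α := Real.rpow_le_rpow (by positivity) hA' hα0.le
      have main : (ω/2) ^ α * t ^ ((1:ℝ) - α) ≤ t / s ^ β := by
        rw [ht1α, ← mul_div_assoc]
        rw [div_le_div_iff₀ htαpos hsβpos]
        calc (ω/2) ^ α * t * s ^ β = ((ω/2) ^ α * s ^ β) * t := by ring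
        _ ≤ t ^ α * t := by
              exact mul_le_mul_of_nonneg_right key3 ht.le
        _ = t * t ^ α := by ring
      calc min ((ω/2) ^ α) ((ω/2)^2) * min (t ^ ((1:ℝ) - α)) t⁻¹
          ≤ (ω/2) ^ α * t ^ ((1:ℝ) - α) := by
            apply mul_le_mul (min_le_left _ _) (min_le_left _ _) (by positivity) (by positivity)
      _ ≤ t / s ^ β := main
    · -- large s : ω/2 * s^(n-1) ≤ t
      have hA' : ω/2 * s ^ (n-1) ≤ t := by
        have hsn' : s ^ n = s ^ (n-1) * s := by
          conv_lhs => rw [show n = (n-1) + 1 from by omega]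
          rw [pow_succ]
        have h2 : ω * (s ^ (n-1) * s) ≤ t * (2*s) := by
          rw [← hsn']; nlinarith
        have := (mul_le_mul_iff_of_pos_right hs).mp (by nlinarith [h2] : (ω/2 * s^(n-1)) * s ≤ t * s)
        exact this
      have key3 : (ω/2)^2 * s ^ β ≤ t * t := by
        have h := mul_le_mul hA' hA' (by positivity) ht.le
        calc (ω/2)^2 * s ^ β = (ω/2 * s^(n-1)) * (ω/2 * s^(n-1)) := by
              rw [← hsq]; ring
        _ ≤ t * t := h
      have main : (ω/2)^2 * t⁻¹ ≤ t / s ^ β := by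
        rw [show (ω/2)^2 * t⁻¹ = (ω/2)^2 / t from by ring, div_le_div_iff₀ ht hsβpos]
        linarith [key3]
      calc min ((ω/2) ^ α) ((ω/2)^2) * min (t ^ ((1:ℝ) - α)) t⁻¹
          ≤ (ω/2)^2 * t⁻¹ := by
            apply mul_le_mul (min_le_right _ _) (min_le_right _ _) (by positivity) (by positivity)
      _ ≤ t / s ^ β := main
  · -- upper bound
    have u1 : t / s ^ β ≤ ω ^ α * t ^ ((1:ℝ) - α) := by
      rw [ht1α, ← mul_div_assoc, div_le_div_iff₀ hsβpos htαpos]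
      calc t * t ^ α = t ^ α * t := by ring
      _ ≤ (ω ^ α * s ^ β) * t := mul_le_mul_of_nonneg_right key1 ht.le
      _ = ω ^ α * t * s ^ β := by ring
    have u2 : t / s ^ β ≤ 4*ω^2 * t⁻¹ := by
      rw [show (4:ℝ)*ω^2 * t⁻¹ = 4*ω^2 / t from by ring, div_le_div_iff₀ hsβpos ht]
      linarith [key2]
    rcases min_cases (t ^ ((1:ℝ) - α)) t⁻¹ with ⟨hmin, _⟩ | ⟨hmin, _⟩ <;> rw [hmin]
    · calc t / s ^ β ≤ ω ^ α * t ^ ((1:ℝ) - α) := u1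
      _ ≤ max (ω ^ α) (4*ω^2) * t ^ ((1:ℝ) - α) := by
          apply mul_le_mul_of_nonneg_right (le_max_left _ _) (by positivity)
    · calc t / s ^ β ≤ 4*ω^2 * t⁻¹ := u2
      _ ≤ max (ω ^ α) (4*ω^2) * t⁻¹ := by
          apply mul_le_mul_of_nonneg_right (le_max_right _ _) (by positivity)

lemma sinh_pow_integral (m : ℕ) (hm : 1 ≤ m) (r : ℝ) :
    ∫ x in (0:ℝ)..r, Real.sinh x ^ (m - 1) * Real.cosh x = Real.sinh r ^ m / m := by
  have hm0 : (m : ℝ) ≠ 0 := Nat.cast_ne_zero.mpr (by omega)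
  have h : ∀ x ∈ Set.uIcc (0:ℝ) r, HasDerivAt (fun y => Real.sinh y ^ m / m)
      (Real.sinh x ^ (m - 1) * Real.cosh x) x := by
    intro x _
    have h1 : HasDerivAt (fun y => Real.sinh y ^ m)
        ((m : ℝ) * Real.sinh x ^ (m - 1) * Real.cosh x) x :=
      (Real.hasDerivAt_sinh x).pow m
    have h2 := h1.div_const (m : ℝ)
    refine h2.congr_deriv ?_
    rw [div_eq_iff hm0]; ring
  rw [intervalIntegral.integral_eq_sub_of_hasDerivAt h
    (((Real.continuous_sinh.pow _).mul Real.continuous_cosh).intervalIntegrable _ _)]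
  rw [Real.sinh_zero, zero_pow (by omega)]
  ring

lemma sinh_nonneg' {x : ℝ} (hx : 0 ≤ x) : 0 ≤ Real.sinh x := by
  rw [← Real.sinh_zero]; exact Real.sinh_le_sinh.mpr hx


theorem stmt12 (n : ℕ) (hn : 2 ≤ n) (ω : ℝ)
    (hω : ω = (volume (Metric.ball (0 : EuclideanSpace ℝ (Fin n)) 1)).toReal)
    (V ϱ : ℝ → ℝ)
    (hV : ∀ r : ℝ, V r = n * ω * ∫ t in Ioo (0 : ℝ) r, Real.sinh t ^ (n - 1))
    (hϱ1 : ∀ r : ℝ, 0 ≤ r → ϱ (V r) = r)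
    (hϱ2 : ∀ t : ℝ, 0 ≤ t → 0 ≤ ϱ t ∧ V (ϱ t) = t) :
    ∃ c C : ℝ, 0 < c ∧ 0 < C ∧ ∀ t : ℝ, 0 < t →
      c * min (t ^ (-1 + 2 / (n : ℝ))) t⁻¹ ≤ t * Real.sinh (ϱ t) ^ ((2 : ℝ) - 2 * n) ∧
      t * Real.sinh (ϱ t) ^ ((2 : ℝ) - 2 * n) ≤ C * min (t ^ (-1 + 2 / (n : ℝ))) t⁻¹ := by
  have hnR : (2:ℝ) ≤ n := by exact_mod_cast hn
  have hn0 : (0:ℝ) < n := by linarith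
  have hω0 : 0 < ω := by
    rw [hω]
    have h1 : 0 < volume (Metric.ball (0 : EuclideanSpace ℝ (Fin n)) 1) :=
      Metric.measure_ball_pos _ _ one_pos
    have h2 : volume (Metric.ball (0 : EuclideanSpace ℝ (Fin n)) 1) < ⊤ :=
      measure_ball_lt_top
    exact ENNReal.toReal_pos h1.ne' h2.ne
  refine ⟨min ((ω/2) ^ ((2*(n:ℝ)-2)/n)) ((ω/2)^2), max (ω ^ ((2*(n:ℝ)-2)/n)) (4*ω^2),
    lt_min (by positivity) (by positivity), lt_of_lt_of_le (by positivity) (le_max_left _ _), ?_⟩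
  intro t ht
  obtain ⟨hr0, hVr⟩ := hϱ2 t ht.le
  set r := ϱ t with hrdef
  have hr : 0 < r := by
    rcases hr0.lt_or_eq with h | h
    · exact h
    · exfalso
      have hV0 : V 0 = 0 := by rw [hV]; simp
      rw [← h, hV0] at hVr
      exact ht.ne hVr
  set s := Real.sinh r with hsdef
  have hs : 0 < s := by
    rw [hsdef, ← Real.sinh_zero]; exact Real.sinh_lt_sinh.mpr hr
  -- integral identities and bounds
  have hI : (∫ x in Ioo (0:ℝ) r, Real.sinh x ^ (n-1)) = ∫ x in (0:ℝ)..r, Real.sinh x ^ (n-1) := by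
    rw [intervalIntegral.integral_of_le hr.le, MeasureTheory.integral_Ioc_eq_integral_Ioo]
  set I := ∫ x in (0:ℝ)..r, Real.sinh x ^ (n-1) with hIdef
  have int1 : IntervalIntegrable (fun x => Real.sinh x ^ (n-1)) volume 0 r :=
    (Real.continuous_sinh.pow _).intervalIntegrable _ _
  have int2 : IntervalIntegrable (fun x => Real.sinh x ^ (n-1) * Real.cosh x) volume 0 r :=
    ((Real.continuous_sinh.pow _).mul Real.continuous_cosh).intervalIntegrable _ _
  have int3 : IntervalIntegrable (fun x => Real.sinh x ^ (n-1-1) * Real.cosh x) volume 0 r :=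
    ((Real.continuous_sinh.pow _).mul Real.continuous_cosh).intervalIntegrable _ _
  have int4 : IntervalIntegrable (fun x => Real.sinh x ^ (n-1) * Real.cosh r) volume 0 r :=
    ((Real.continuous_sinh.pow _).mul continuous_const).intervalIntegrable _ _
  have F1 := sinh_pow_integral n (by omega) r
  have F2 := sinh_pow_integral (n-1) (by omega) r
  have hteq : t = n * ω * I := by rw [← hI, ← hV r, hVr]
  have hIB : I ≤ Real.sinh r ^ n / n := by
    rw [← F1, hIdef]
    apply intervalIntegral.integral_mono_on hr.le int1 int2
    intro x hx
    exact le_mul_of_one_le_right (pow_nonneg (sinh_nonneg' hx.1) _) (Real.one_le_cosh x)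
  have hIC : I ≤ Real.sinh r ^ (n-1) / ((n-1:ℕ):ℝ) := by
    rw [← F2, hIdef]
    apply intervalIntegral.integral_mono_on hr.le int1 int3
    intro x hx
    have h1 : Real.sinh x ^ (n-1) = Real.sinh x ^ (n-1-1) * Real.sinh x := by
      rw [← pow_succ]; congr 1; omega
    rw [h1]
    exact mul_le_mul_of_nonneg_left (Real.sinh_lt_cosh x).le
      (pow_nonneg (sinh_nonneg' hx.1) _)
  have hIA : Real.sinh r ^ n / n ≤ Real.cosh r * I := by
    rw [← F1]
    calc (∫ x in (0:ℝ)..r, Real.sinh x ^ (n-1) * Real.cosh x)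
        ≤ ∫ x in (0:ℝ)..r, Real.sinh x ^ (n-1) * Real.cosh r := by
          apply intervalIntegral.integral_mono_on hr.le int2 int4
          intro x hx
          apply mul_le_mul_of_nonneg_left _ (pow_nonneg (sinh_nonneg' hx.1) _)
          apply Real.cosh_le_cosh.mpr
          rw [abs_of_nonneg hx.1, abs_of_nonneg hr.le]
          exact hx.2
    _ = Real.cosh r * I := by rw [intervalIntegral.integral_mul_const]; ring
  -- the three algebraic hypotheses
  have hB : t ≤ ω * s ^ n := by
    calc t = n * ω * I := hteq
    _ ≤ n * ω * (s ^ n / n) := mul_le_mul_of_nonneg_left hIB (by positivity)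
    _ = ω * s ^ n := by field_simp
  have hnm1 : ((n-1:ℕ):ℝ) = (n:ℝ) - 1 := by
    push_cast [show (1:ℕ) ≤ n from by omega]; ring
  have hC : t ≤ 2 * ω * s ^ (n-1) := by
    have hd : (0:ℝ) < ((n-1:ℕ):ℝ) := by rw [hnm1]; linarith
    calc t = n * ω * I := hteq
    _ ≤ n * ω * (s ^ (n-1) / ((n-1:ℕ):ℝ)) := mul_le_mul_of_nonneg_left hIC (by positivity)
    _ = ((n:ℝ) / ((n-1:ℕ):ℝ)) * (ω * s ^ (n-1)) := by ring
    _ ≤ 2 * (ω * s ^ (n-1)) := by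
        apply mul_le_mul_of_nonneg_right _ (by positivity)
        rw [div_le_iff₀ hd, hnm1]
        linarith
    _ = 2 * ω * s ^ (n-1) := by ring
  have hA : ω * s ^ n ≤ t * (1 + s) := by
    have hcosh : Real.cosh r ≤ 1 + s := by
      nlinarith [Real.cosh_sq r, Real.cosh_pos r, hs]
    calc ω * s ^ n = n * ω * (s ^ n / n) := by field_simp
    _ ≤ n * ω * (Real.cosh r * I) := mul_le_mul_of_nonneg_left hIA (by positivity)
    _ = Real.cosh r * t := by rw [hteq]; ring
    _ ≤ (1 + s) * t := mul_le_mul_of_nonneg_right hcosh ht.le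
    _ = t * (1 + s) := by ring
  exact core n hn ω t s hω0 ht hs hA hB hC
end

section
/- For every k ∈ ℕ₀ and every t ∈ (0,∞), R_2^{k+1} χ_{(0,1)}(t) ≳ (1+log t)^k χ_{(1,∞)}(t)/t, with implicit constant depending only on n and k. -/
open MeasureTheory Set Real
open scoped ENNReal

lemma one_le_phi {n : ℕ} (hn : 3 ≤ n) {t : ℝ} (ht : 0 < t) (ht1 : t ≤ 1) :
    (1:ℝ) ≤ phi n 2 t := by
  have hn0 : (0:ℝ) < (n:ℝ) := by exact_mod_cast Nat.lt_of_lt_of_le (by norm_num) hn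
  have hn3 : (3:ℝ) ≤ (n:ℝ) := by exact_mod_cast hn
  refine le_min ?_ ((one_le_inv₀ ht).2 ht1)
  refine Real.one_le_rpow_of_pos_of_le_one_of_nonpos ht ht1 ?_
  have : 2 / (n:ℝ) ≤ 2/3 := by
    apply div_le_div_of_nonneg_left (by norm_num) (by norm_num) hn3
  linarith

lemma phi_of_one_le_s15 {n : ℕ} (hn : 3 ≤ n) {t : ℝ} (ht : 1 ≤ t) :
    phi n 2 t = t⁻¹ := by
  have hn0 : (0:ℝ) < (n:ℝ) := by exact_mod_cast Nat.lt_of_lt_of_le (by norm_num) hn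
  refine min_eq_right ?_
  have h2n : (0:ℝ) ≤ 2/n := by positivity
  have := Real.rpow_le_rpow_of_exponent_le ht
    (show (-1:ℝ) ≤ -1 + 2/n by linarith)
  rwa [Real.rpow_neg_one] at this

lemma lint_base (t : ℝ) :
    ∫⁻ s in Ioo (0:ℝ) t, (Ioo (0:ℝ) 1).indicator 1 s = ENNReal.ofReal (min 1 t) := by
  rw [lintegral_indicator measurableSet_Ioo, Measure.restrict_restrict measurableSet_Ioo,
    Set.Ioo_inter_Ioo]
  simp only [Pi.one_apply, lintegral_one, Measure.restrict_apply_univ, Real.volume_Ioo]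
  simp

lemma log_integral (k : ℕ) {t : ℝ} (ht : 1 < t) :
    ∫ s in (1:ℝ)..t, (1 + Real.log s)^k / s = ((1 + Real.log t)^(k+1) - 1)/(k+1) := by
  have hderiv : ∀ s ∈ uIcc (1:ℝ) t,
      HasDerivAt (fun u => (1 + Real.log u)^(k+1)/((k:ℝ)+1)) ((1 + Real.log s)^k / s) s := by
    intro s hs
    have hs0 : 0 < s := by
      rcases hs with ⟨h1, _⟩
      have : min 1 t = 1 := min_eq_left ht.le
      rw [this] at h1; linarith
    have h1 : HasDerivAt (fun u : ℝ => 1 + Real.log u) s⁻¹ s :=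
      (Real.hasDerivAt_log hs0.ne').const_add 1
    have h2 := (h1.pow (k+1)).div_const ((k:ℝ)+1)
    refine HasDerivAt.congr_deriv h2 ?_
    push_cast
    field_simp
  have hcont : ContinuousOn (fun s => (1 + Real.log s)^k / s) (uIcc (1:ℝ) t) := by
    apply ContinuousOn.div
    · exact (continuousOn_const.add (Real.continuousOn_log.mono (by
        intro s hs; rcases hs with ⟨h1, _⟩
        have : min 1 t = 1 := min_eq_left ht.le
        rw [this] at h1
        simp only [mem_compl_iff, mem_singleton_iff]
        intro h; rw [h] at h1; linarith))).pow k
    · exact continuousOn_id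
    · intro s hs
      rcases hs with ⟨h1, _⟩
      have : min 1 t = 1 := min_eq_left ht.le
      rw [this] at h1
      intro h; rw [h] at h1; linarith
  rw [intervalIntegral.integral_eq_sub_of_hasDerivAt hderiv
    (hcont.intervalIntegrable)]
  simp [Real.log_one, sub_div]

lemma log_lintegral (k : ℕ) {c : ℝ} (hc : 0 < c) {t : ℝ} (ht : 1 < t) :
    ENNReal.ofReal (c * (((1 + Real.log t)^(k+1) - 1)/(k+1))) ≤
      ∫⁻ s in Ioo (1:ℝ) t, ENNReal.ofReal (c * (1 + Real.log s)^k / s) := by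
  have hcont : ContinuousOn (fun s => c * (1 + Real.log s)^k / s) (Icc (1:ℝ) t) := by
    apply ContinuousOn.div
    · exact continuousOn_const.mul ((continuousOn_const.add
        (Real.continuousOn_log.mono (by
          intro s hs; rcases hs with ⟨h1, _⟩
          simp only [mem_compl_iff, mem_singleton_iff]
          intro h; rw [h] at h1; linarith))).pow k)
    · exact continuousOn_id
    · intro s hs; rcases hs with ⟨h1, _⟩; intro h; rw [h] at h1; linarith
  have hint : IntegrableOn (fun s => c * (1 + Real.log s)^k / s) (Ioo (1:ℝ) t) := by
    exact (hcont.integrableOn_Icc).mono_set Ioo_subset_Icc_self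
  have hnn : 0 ≤ᵐ[volume.restrict (Ioo (1:ℝ) t)] fun s => c * (1 + Real.log s)^k / s := by
    filter_upwards [ae_restrict_mem measurableSet_Ioo] with s hs
    rcases hs with ⟨h1, _⟩
    have hs0 : (0:ℝ) < s := by linarith
    have hl : (0:ℝ) ≤ Real.log s := Real.log_nonneg h1.le
    simp only [Pi.zero_apply]
    positivity
  have heq := MeasureTheory.ofReal_integral_eq_lintegral_ofReal hint hnn
  refine le_of_le_of_eq ?_ heq
  apply le_of_eq
  congr 1
  rw [← MeasureTheory.integral_Ioc_eq_integral_Ioo,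
    ← intervalIntegral.integral_of_le ht.le]
  rw [show (fun s => c * (1 + Real.log s)^k / s) = (fun s => c * ((1 + Real.log s)^k / s)) by
    funext s; ring]
  rw [intervalIntegral.integral_const_mul, log_integral k ht]

lemma key (n : ℕ) (hn : 3 ≤ n) (k : ℕ) :
    ∃ a c : ℝ, 0 < a ∧ 0 < c ∧
      (∀ t ∈ Ioo (1 - (1/2:ℝ)^(k+1)) 1,
        ENNReal.ofReal a ≤ (Rop n 2)^[k+1] ((Ioo (0:ℝ) 1).indicator 1) t) ∧
      (∀ t : ℝ, 1 < t →
        ENNReal.ofReal (c * (1 + Real.log t)^k / t) ≤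
          (Rop n 2)^[k+1] ((Ioo (0:ℝ) 1).indicator 1) t) := by
  induction k with
  | zero =>
    refine ⟨1/2, 1, by norm_num, by norm_num, ?_, ?_⟩
    · intro t ht
      rcases ht with ⟨h1, h2⟩
      norm_num at h1
      have ht0 : 0 < t := by linarith
      rw [Function.iterate_succ_apply', Function.iterate_zero_apply]
      rw [Rop, lint_base, min_eq_right h2.le]
      calc ENNReal.ofReal (1/2) = ENNReal.ofReal 1 * ENNReal.ofReal (1/2) := by
            rw [ENNReal.ofReal_one, one_mul]
        _ ≤ ENNReal.ofReal (phi n 2 t) * ENNReal.ofReal t := by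
            exact mul_le_mul' (ENNReal.ofReal_le_ofReal (one_le_phi hn ht0 h2.le))
              (ENNReal.ofReal_le_ofReal (by linarith))
    · intro t ht
      rw [Function.iterate_succ_apply', Function.iterate_zero_apply]
      rw [Rop, lint_base, min_eq_left ht.le, phi_of_one_le_s15 hn ht.le]
      rw [ENNReal.ofReal_one, mul_one]
      apply ENNReal.ofReal_le_ofReal
      rw [pow_zero]
      simp
  | succ k ih =>
    obtain ⟨a, c, ha, hc, hA, hB⟩ := ih
    set g := (Rop n 2)^[k+1] ((Ioo (0:ℝ) 1).indicator 1) with hg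
    have hiter : ∀ t, (Rop n 2)^[k+2] ((Ioo (0:ℝ) 1).indicator 1) t = Rop n 2 g t := by
      intro t
      rw [show k+2 = (k+1)+1 by ring, Function.iterate_succ_apply']
    have hpow : (0:ℝ) < (1/2:ℝ)^(k+2) := by positivity
    have hpow1 : (1/2:ℝ)^(k+1) ≤ 1/2 := by
      calc (1/2:ℝ)^(k+1) ≤ (1/2:ℝ)^1 := by
            apply pow_le_pow_of_le_one (by norm_num) (by norm_num) (by omega)
        _ = 1/2 := pow_one _
    have hpow2 : (1/2:ℝ)^(k+2) ≤ 1/2 := by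
      calc (1/2:ℝ)^(k+2) ≤ (1/2:ℝ)^1 := by
            apply pow_le_pow_of_le_one (by norm_num) (by norm_num) (by omega)
        _ = 1/2 := pow_one _
    have hIvol : ∀ b : ℝ, (1 - (1/2:ℝ)^(k+1)) < b → b ≤ 1 →
        ENNReal.ofReal a * volume (Ioo (1 - (1/2:ℝ)^(k+1)) b) ≤
          ∫⁻ s in Ioo (1 - (1/2:ℝ)^(k+1)) b, g s := by
      intro b hb hb1
      rw [← setLIntegral_const]
      apply setLIntegral_mono' measurableSet_Ioo
      intro x hx
      exact hA x ⟨hx.1, lt_of_lt_of_le hx.2 hb1⟩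
    refine ⟨a * (1/2)^(k+2), min (a * (1/2)^(k+1)) (c/(k+1)), by positivity,
      lt_min (by positivity) (by positivity), ?_, ?_⟩
    · -- part A
      intro t ht
      rcases ht with ⟨h1, h2⟩
      have ht0 : (0:ℝ) < t := by nlinarith [hpow2]
      rw [hiter t]
      rw [Rop]
      have hsub : Ioo (1 - (1/2:ℝ)^(k+1)) (1 - (1/2:ℝ)^(k+2)) ⊆ Ioo (0:ℝ) t := by
        apply Ioo_subset_Ioo
        · linarith
        · linarith
      have hlow := hIvol (1 - (1/2:ℝ)^(k+2)) (by
          have : (1/2:ℝ)^(k+2) < (1/2:ℝ)^(k+1) := by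
            apply pow_lt_pow_right_of_lt_one₀ (by norm_num) (by norm_num) (by omega)
          linarith) (by linarith)
      have hvol : volume (Ioo (1 - (1/2:ℝ)^(k+1)) (1 - (1/2:ℝ)^(k+2))) =
          ENNReal.ofReal ((1/2:ℝ)^(k+2)) := by
        rw [Real.volume_Ioo]
        congr 1
        have : (1/2:ℝ)^(k+1) = 2 * (1/2:ℝ)^(k+2) := by
          rw [show k+2 = (k+1)+1 by ring, pow_succ]
          ring
        linarith
      calc ENNReal.ofReal (a * (1/2)^(k+2))
          = ENNReal.ofReal 1 * (ENNReal.ofReal a * ENNReal.ofReal ((1/2:ℝ)^(k+2))) := by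
            rw [ENNReal.ofReal_one, one_mul, ← ENNReal.ofReal_mul ha.le]
        _ ≤ ENNReal.ofReal (phi n 2 t) * ∫⁻ s in Ioo (0:ℝ) t, g s := by
            apply mul_le_mul'
            · exact ENNReal.ofReal_le_ofReal (one_le_phi hn ht0 h2.le)
            · rw [← hvol]
              exact le_trans hlow (lintegral_mono_set hsub)
    · -- part B
      intro t ht
      rw [hiter t, Rop, phi_of_one_le_s15 hn ht.le]
      have hL : (0:ℝ) ≤ Real.log t := Real.log_nonneg ht.le
      set L := Real.log t with hLdef
      set A : ℝ := a * (1/2)^(k+1) with hAdef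
      have hunion : Ioo (1 - (1/2:ℝ)^(k+1)) 1 ∪ Ioo 1 t ⊆ Ioo (0:ℝ) t := by
        apply union_subset
        · exact Ioo_subset_Ioo (by linarith) (by linarith)
        · exact Ioo_subset_Ioo (by linarith) le_rfl
      have hdisj : Disjoint (Ioo (1 - (1/2:ℝ)^(k+1)) 1) (Ioo (1:ℝ) t) := by
        rw [Set.disjoint_left]
        intro x hx hx'
        exact absurd hx'.1 (not_lt.2 hx.2.le)
      have h1int : ENNReal.ofReal A ≤ ∫⁻ s in Ioo (1 - (1/2:ℝ)^(k+1)) 1, g s := by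
        have := hIvol 1 (by
          have hp : (0:ℝ) < (1/2:ℝ)^(k+1) := by positivity
          linarith) le_rfl
        rw [Real.volume_Ioo] at this
        refine le_trans (le_of_eq ?_) this
        rw [← ENNReal.ofReal_mul ha.le, hAdef]
        congr 1
        ring
      have h2int : ENNReal.ofReal (c * (((1 + L)^(k+1) - 1)/(k+1))) ≤
          ∫⁻ s in Ioo (1:ℝ) t, g s := by
        refine le_trans (log_lintegral k hc ht) ?_
        apply setLIntegral_mono' measurableSet_Ioo
        intro s hs
        exact hB s hs.1
      have hsum : ENNReal.ofReal A + ENNReal.ofReal (c * (((1 + L)^(k+1) - 1)/(k+1))) ≤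
          ∫⁻ s in Ioo (0:ℝ) t, g s := by
        calc ENNReal.ofReal A + ENNReal.ofReal (c * (((1 + L)^(k+1) - 1)/(k+1)))
            ≤ (∫⁻ s in Ioo (1 - (1/2:ℝ)^(k+1)) 1, g s) + ∫⁻ s in Ioo (1:ℝ) t, g s :=
              add_le_add h1int h2int
          _ = ∫⁻ s in Ioo (1 - (1/2:ℝ)^(k+1)) 1 ∪ Ioo 1 t, g s :=
              (lintegral_union measurableSet_Ioo hdisj).symm
          _ ≤ _ := lintegral_mono_set hunion
      have ht0 : (0:ℝ) < t := by linarith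
      calc ENNReal.ofReal (min (a * (1/2)^(k+1)) (c/(k+1)) * (1 + L)^(k+1) / t)
          ≤ ENNReal.ofReal (t⁻¹ * (A + c * (((1 + L)^(k+1) - 1)/(k+1)))) := by
            apply ENNReal.ofReal_le_ofReal
            rw [div_eq_mul_inv, mul_comm _ t⁻¹]
            apply mul_le_mul_of_nonneg_left _ (by positivity)
            set c' := min (a * (1/2)^(k+1)) (c/(k+1)) with hc'
            have hc'A : c' ≤ A := min_le_left _ _
            have hc'B : c' ≤ c/(k+1) := min_le_right _ _
            have hM : (1:ℝ) ≤ (1+L)^(k+1) := one_le_pow₀ (by linarith)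
            have hc'nn : 0 ≤ c' := le_min (by positivity) (by positivity)
            have expand : c' * (1+L)^(k+1) = c' + c' * ((1+L)^(k+1) - 1) := by ring
            rw [expand]
            apply add_le_add (le_trans hc'A (le_refl A))
            rw [show c * (((1 + L)^(k+1) - 1)/(k+1)) = (c/(k+1)) * ((1+L)^(k+1)-1) by ring]
            apply mul_le_mul_of_nonneg_right hc'B (by linarith)
        _ ≤ ENNReal.ofReal t⁻¹ * (ENNReal.ofReal A + ENNReal.ofReal (c * (((1 + L)^(k+1) - 1)/(k+1)))) := by
            rw [← ENNReal.ofReal_add (by rw [hAdef]; positivity) (by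
              have h1 : (1:ℝ) ≤ (1+L)^(k+1) := one_le_pow₀ (by linarith)
              exact mul_nonneg hc.le (div_nonneg (by linarith) (by positivity)))]
            rw [← ENNReal.ofReal_mul (by positivity)]
        _ ≤ ENNReal.ofReal t⁻¹ * ∫⁻ s in Ioo (0:ℝ) t, g s := mul_le_mul' le_rfl hsum

theorem stmt15 (n : ℕ) (hn : 3 ≤ n) (k : ℕ) :
    ∃ c : ℝ, 0 < c ∧ ∀ t : ℝ, 0 < t →
      ENNReal.ofReal (c * (Ioi (1 : ℝ)).indicator (fun u => (1 + Real.log u) ^ k / u) t) ≤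
        (Rop n 2)^[k + 1] ((Ioo (0 : ℝ) 1).indicator 1) t := by
  obtain ⟨a, c, ha, hc, hA, hB⟩ := key n hn k
  refine ⟨c, hc, ?_⟩
  intro t ht
  by_cases h1 : 1 < t
  · rw [Set.indicator_of_mem (by exact h1)]
    refine le_trans (le_of_eq ?_) (hB t h1)
    congr 1
    ring
  · rw [Set.indicator_of_notMem (by simpa using h1)]
    simp
end
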